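/- Let e ∈ ℝ, A₀ : ℝ × ℝ³ → ℝ and A : ℝ × ℝ³ → ℝ³ be continuously differentiable, H : ℝ → ℝ³ continuous, and let ψ : ℝ × ℝ³ → (Fin 2 → ℂ) be twice continuously differentiable and satisfy the Pauli equation: for each spinor component k ∈ Fin 2, i·∂ₜψₖ(t,x) = e·A₀(t,x)·ψₖ(t,x) + Σ_{b=1}^{3} (−i∂_{x_b} − e·A_b(t,x))((−i∂_{x_b} − e·A_b(t,·))ψₖ)(t,x) − e·Σ_{j=1}^{3} H_j(t)·(σ_j ψ(t,x))ₖ. Let U : ℝ → Matrix (Fin 2) (Fin 2) ℂ be differentiable with U(t) invertible for all t and i·U'(t) = −e·(H(t)·σ)·U(t). Then the function φ(t,x) = U(t)⁻¹ · ψ(t,x) satisfies, componentwise, the Schrödinger equation without magnetic interaction term: i·∂ₜφₖ(t,x) = e·A₀(t,x)·φₖ(t,x) + Σ_{b=1}^{3} (−i∂_{x_b} − e·A_b(t,x))((−i∂_{x_b} − e·A_b(t,·))φₖ)(t,x) for k ∈ Fin 2. In other words, the change of variables ψ = U(t)·φ transforms the Pauli equation into a system of two uncoupled Schrödinger equations.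 -/

import Mathlib

open Matrix

/-- The first Pauli matrix. -/
noncomputable def sigma1 : Matrix (Fin 2) (Fin 2) ℂ := !![0, 1; 1, 0]

/-- The second Pauli matrix. -/
noncomputable def sigma2 : Matrix (Fin 2) (Fin 2) ℂ := !![0, -Complex.I; Complex.I, 0]

/-- The third Pauli matrix. -/
noncomputable def sigma3 : Matrix (Fin 2) (Fin 2) ℂ := !![1, 0; 0, -1]

/-- The Pauli matrices as a family indexed by `Fin 3`. -/
noncomputable def pauliMat : Fin 3 → Matrix (Fin 2) (Fin 2) ℂ := ![sigma1, sigma2, sigma3]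

/-- For `H ∈ ℝ³`, `H·σ = H₁σ₁ + H₂σ₂ + H₃σ₃`. -/
noncomputable def pauliDot (H : Fin 3 → ℝ) : Matrix (Fin 2) (Fin 2) ℂ :=
  (H 0 : ℂ) • sigma1 + (H 1 : ℂ) • sigma2 + (H 2 : ℂ) • sigma3

/-- Partial derivative `∂_{x_b} f (x)` of a complex-valued function on `ℝ³`. -/
noncomputable def pd (b : Fin 3) (f : (Fin 3 → ℝ) → ℂ) (x : Fin 3 → ℝ) : ℂ :=
  fderiv ℝ f x (Pi.single b 1)

/-- The operator `(-i ∂_{x_b} - e A_b)` applied to a function `f` at `x`. -/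
noncomputable def mom (e : ℝ) (Ab : (Fin 3 → ℝ) → ℝ) (b : Fin 3)
    (f : (Fin 3 → ℝ) → ℂ) (x : Fin 3 → ℝ) : ℂ :=
  -Complex.I * pd b f x - (↑(e * Ab x)) * f x

lemma mom_comb (e : ℝ) (Ab : (Fin 3 → ℝ) → ℝ) (b : Fin 3) (c d : ℂ)
    (f g : (Fin 3 → ℝ) → ℂ) (x : Fin 3 → ℝ)
    (hf : DifferentiableAt ℝ f x) (hg : DifferentiableAt ℝ g x) :
    mom e Ab b (fun z => c * f z + d * g z) x = c * mom e Ab b f x + d * mom e Ab b g x := by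
  simp only [mom, pd]
  rw [fderiv_fun_add (hf.const_mul c) (hg.const_mul d), fderiv_const_mul hf c, fderiv_const_mul hg d]
  simp only [ContinuousLinearMap.add_apply, ContinuousLinearMap.smul_apply, smul_eq_mul]
  ring

lemma mom_diff (e : ℝ) (Ab : (Fin 3 → ℝ) → ℝ) (b : Fin 3) (f : (Fin 3 → ℝ) → ℂ)
    (hAb : ContDiff ℝ 1 Ab) (hf : ContDiff ℝ 2 f) :
    Differentiable ℝ (fun y => mom e Ab b f y) := by
  simp only [mom, pd]
  have h1 : ContDiff ℝ 1 (fderiv ℝ f) := hf.fderiv_right (by norm_num)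
  have h2 : Differentiable ℝ fun y => fderiv ℝ f y (Pi.single b 1) :=
    (h1.clm_apply contDiff_const).differentiable one_ne_zero
  exact (h2.const_mul _).sub
    ((Complex.ofRealCLM.differentiable.comp ((hAb.differentiable one_ne_zero).const_mul e)).mul
      (hf.differentiable two_ne_zero))

/-- if `ψ` solves the Pauli equation with spatially homogeneous
magnetic field `H(t)`, and `i U' = -e (H·σ) U` (i.e. `U' = i e (H·σ) U`) with
`U(t)` invertible, then `φ = U(t)⁻¹ ψ` solves, componentwise, the Schrödinger
equation without the magnetic interaction term. -/
theorem pauli_to_uncoupled_schrodinger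
    (e : ℝ) (A0 : ℝ → (Fin 3 → ℝ) → ℝ) (A : ℝ → (Fin 3 → ℝ) → Fin 3 → ℝ)
    (H : ℝ → Fin 3 → ℝ) (ψ : ℝ → (Fin 3 → ℝ) → Fin 2 → ℂ)
    (U : ℝ → Matrix (Fin 2) (Fin 2) ℂ)
    (hA0 : ContDiff ℝ 1 fun p : ℝ × (Fin 3 → ℝ) => A0 p.1 p.2)
    (hA : ContDiff ℝ 1 fun p : ℝ × (Fin 3 → ℝ) => A p.1 p.2)
    (hH : Continuous H)
    (hψ : ContDiff ℝ 2 fun p : ℝ × (Fin 3 → ℝ) => ψ p.1 p.2)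
    (hψeq : ∀ (t : ℝ) (x : Fin 3 → ℝ) (k : Fin 2),
      Complex.I * deriv (fun s => ψ s x k) t
        = (↑(e * A0 t x)) * ψ t x k
          + ∑ b : Fin 3,
              mom e (fun y => A t y b) b
                (fun y => mom e (fun z => A t z b) b (fun z => ψ t z k) y) x
          - (e : ℂ) * ∑ j : Fin 3, (↑(H t j)) * ((pauliMat j).mulVec (ψ t x) k))
    (hUdiff : ∀ i j : Fin 2, Differentiable ℝ fun t => U t i j)
    (hUinv : ∀ t, IsUnit (U t))
    (hUeq : ∀ (t : ℝ) (i j : Fin 2),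
      Complex.I * deriv (fun s => U s i j) t
        = ((-(e : ℂ)) • (pauliDot (H t) * U t)) i j) :
    ∀ (t : ℝ) (x : Fin 3 → ℝ) (k : Fin 2),
      Complex.I * deriv (fun s => ((U s)⁻¹).mulVec (ψ s x) k) t
        = (↑(e * A0 t x)) * ((U t)⁻¹).mulVec (ψ t x) k
          + ∑ b : Fin 3,
              mom e (fun y => A t y b) b
                (fun y => mom e (fun z => A t z b) b
                  (fun z => ((U t)⁻¹).mulVec (ψ t z) k) y) x := by
  -- basic invertibility facts
  have hUdet : ∀ s, IsUnit (U s).det := fun s => (Matrix.isUnit_iff_isUnit_det _).mp (hUinv s)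
  have hdetne : ∀ s, (U s).det ≠ 0 := fun s => (hUdet s).ne_zero
  have hUV : ∀ s, U s * (U s)⁻¹ = 1 := fun s => Matrix.mul_nonsing_inv _ (hUdet s)
  have hVU : ∀ s, (U s)⁻¹ * U s = 1 := fun s => Matrix.nonsing_inv_mul _ (hUdet s)
  -- differentiability of entries of U⁻¹
  have hdetdiff : Differentiable ℝ fun s => (U s).det := by
    simp only [Matrix.det_fin_two]
    exact ((hUdiff 0 0).mul (hUdiff 1 1)).sub ((hUdiff 0 1).mul (hUdiff 1 0))
  have hadjdiff : ∀ i j : Fin 2, Differentiable ℝ fun s => (U s).adjugate i j := by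
    intro i j
    fin_cases i <;> fin_cases j <;> simp only [Matrix.adjugate_fin_two] <;> simp
    · exact hUdiff 1 1
    · exact hUdiff 0 1
    · exact hUdiff 1 0
    · exact hUdiff 0 0
  have hVdiff : ∀ i j : Fin 2, Differentiable ℝ fun s => (U s)⁻¹ i j := by
    intro i j
    have hVeq : (fun s => (U s)⁻¹ i j) = fun s => ((U s).det)⁻¹ * (U s).adjugate i j := by
      funext s
      rw [Matrix.inv_def]
      simp [Ring.inverse_eq_inv', Matrix.smul_apply, smul_eq_mul]
    rw [hVeq]
    exact (hdetdiff.inv hdetne).mul (hadjdiff i j)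
  -- smoothness of slices of ψ and A
  have hψc : ∀ l : Fin 2, ContDiff ℝ 2 fun p : ℝ × (Fin 3 → ℝ) => ψ p.1 p.2 l :=
    fun l => contDiff_pi.mp hψ l
  have hψt : ∀ (x : Fin 3 → ℝ) (l : Fin 2), Differentiable ℝ fun s => ψ s x l := fun x l =>
    ((hψc l).comp (contDiff_id.prodMk contDiff_const)).differentiable two_ne_zero
  have hψx : ∀ (t : ℝ) (l : Fin 2), ContDiff ℝ 2 fun y => ψ t y l := fun t l =>
    (hψc l).comp (contDiff_const.prodMk contDiff_id)
  have hAx : ∀ (t : ℝ) (b : Fin 3), ContDiff ℝ 1 fun y => A t y b := fun t b =>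
    (contDiff_pi.mp hA b).comp (contDiff_const.prodMk contDiff_id)
  intro t x k
  -- derivative of U, in useful form
  have hU' : ∀ i j : Fin 2, deriv (fun s => U s i j) t
      = (Complex.I * e) * ((pauliDot (H t) * U t) i j) := by
    intro i j
    have h := hUeq t i j
    have h2 := congrArg (fun z => -Complex.I * z) h
    simp only [← mul_assoc, neg_mul, Complex.I_mul_I, neg_neg, one_mul] at h2
    rw [h2]
    simp only [Matrix.smul_apply, smul_eq_mul]
    ring
  -- derivative of U⁻¹
  have hD : ∀ i j : Fin 2, deriv (fun s => (U s)⁻¹ i j) t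
      = ((-(Complex.I * e)) • ((U t)⁻¹ * pauliDot (H t))) i j := by
    have hzero : ∀ i j : Fin 2,
        deriv (fun s => (U s)⁻¹ i 0) t * U t 0 j + (U t)⁻¹ i 0 * deriv (fun s => U s 0 j) t
          + (deriv (fun s => (U s)⁻¹ i 1) t * U t 1 j
            + (U t)⁻¹ i 1 * deriv (fun s => U s 1 j) t) = 0 := by
      intro i j
      have hfun : (fun s => (U s)⁻¹ i 0 * U s 0 j + (U s)⁻¹ i 1 * U s 1 j)
          = fun _ => (1 : Matrix (Fin 2) (Fin 2) ℂ) i j := by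
        funext s
        have : ((U s)⁻¹ * U s) i j = (1 : Matrix (Fin 2) (Fin 2) ℂ) i j := by rw [hVU s]
        rw [← this, Matrix.mul_apply, Fin.sum_univ_two]
      have h0 : deriv (fun s => (U s)⁻¹ i 0 * U s 0 j + (U s)⁻¹ i 1 * U s 1 j) t = 0 := by
        rw [hfun]; simp
      rw [deriv_fun_add (((hVdiff i 0).fun_mul (hUdiff 0 j)).differentiableAt)
            (((hVdiff i 1).fun_mul (hUdiff 1 j)).differentiableAt),
          deriv_fun_mul ((hVdiff i 0).differentiableAt) ((hUdiff 0 j).differentiableAt),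
          deriv_fun_mul ((hVdiff i 1).differentiableAt) ((hUdiff 1 j).differentiableAt)] at h0
      exact h0
    have hDU : (Matrix.of fun i j => deriv (fun s => (U s)⁻¹ i j) t) * U t
        + (U t)⁻¹ * (Matrix.of fun i j => deriv (fun s => U s i j) t) = 0 := by
      ext i j
      simp only [Matrix.add_apply, Matrix.mul_apply, Fin.sum_univ_two, Matrix.zero_apply,
        Matrix.of_apply]
      linear_combination hzero i j
    have hU'mat : (Matrix.of fun i j => deriv (fun s => U s i j) t)
        = (Complex.I * e) • (pauliDot (H t) * U t) := by
      ext i j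
      simp only [Matrix.of_apply, Matrix.smul_apply, smul_eq_mul]
      exact hU' i j
    have hDeq : (Matrix.of fun i j => deriv (fun s => (U s)⁻¹ i j) t)
        = (-(Complex.I * e)) • ((U t)⁻¹ * pauliDot (H t)) := by
      calc (Matrix.of fun i j => deriv (fun s => (U s)⁻¹ i j) t)
          = (Matrix.of fun i j => deriv (fun s => (U s)⁻¹ i j) t) * (U t * (U t)⁻¹) := by
            rw [hUV t, mul_one]
        _ = ((Matrix.of fun i j => deriv (fun s => (U s)⁻¹ i j) t) * U t) * (U t)⁻¹ := by
            rw [mul_assoc]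
        _ = (-((U t)⁻¹ * (Matrix.of fun i j => deriv (fun s => U s i j) t))) * (U t)⁻¹ := by
            rw [eq_neg_of_add_eq_zero_left hDU]
        _ = (-(Complex.I * e)) • ((U t)⁻¹ * pauliDot (H t)) := by
            rw [hU'mat]
            simp only [Matrix.mul_smul]
            rw [← neg_smul, Matrix.smul_mul]
            congr 1
            rw [mul_assoc, mul_assoc, hUV, mul_one]
    intro i j
    rw [← hDeq]; rfl
  -- Pauli dot as entrywise sums
  have hσ : ∀ l : Fin 2, (∑ j : Fin 3, ((H t j : ℂ)) * ((pauliMat j).mulVec (ψ t x) l))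
      = pauliDot (H t) l 0 * ψ t x 0 + pauliDot (H t) l 1 * ψ t x 1 := by
    intro l
    fin_cases l <;>
      simp [pauliDot, pauliMat, sigma1, sigma2, sigma3, Matrix.mulVec, dotProduct,
        Fin.sum_univ_three, Fin.sum_univ_two, Matrix.add_apply, Pi.smul_apply, smul_eq_mul] <;>
      ring
  have hmv : ∀ (s : ℝ) (z : Fin 3 → ℝ), ((U s)⁻¹).mulVec (ψ s z) k
      = (U s)⁻¹ k 0 * ψ s z 0 + (U s)⁻¹ k 1 * ψ s z 1 := by
    intro s z; simp [Matrix.mulVec, dotProduct, Fin.sum_univ_two]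
  have hmomterm : ∀ b : Fin 3,
      mom e (fun y => A t y b) b (fun y => mom e (fun z => A t z b) b
        (fun z => ((U t)⁻¹).mulVec (ψ t z) k) y) x
      = (U t)⁻¹ k 0 * mom e (fun y => A t y b) b
          (fun y => mom e (fun z => A t z b) b (fun z => ψ t z 0) y) x
        + (U t)⁻¹ k 1 * mom e (fun y => A t y b) b
            (fun y => mom e (fun z => A t z b) b (fun z => ψ t z 1) y) x := by
    intro b
    have hinner : (fun y => mom e (fun z => A t z b) b (fun z => ((U t)⁻¹).mulVec (ψ t z) k) y)
        = fun y => (U t)⁻¹ k 0 * mom e (fun z => A t z b) b (fun z => ψ t z 0) y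
          + (U t)⁻¹ k 1 * mom e (fun z => A t z b) b (fun z => ψ t z 1) y := by
      funext y
      have h5 : (fun z => ((U t)⁻¹).mulVec (ψ t z) k)
          = fun z => (U t)⁻¹ k 0 * ψ t z 0 + (U t)⁻¹ k 1 * ψ t z 1 := funext fun z => hmv t z
      rw [h5]
      exact mom_comb e _ b _ _ _ _ y
        (((hψx t 0).differentiable two_ne_zero) y) (((hψx t 1).differentiable two_ne_zero) y)
    rw [hinner]
    exact mom_comb e _ b _ _ _ _ x
      ((mom_diff e _ b _ (hAx t b) (hψx t 0)) x) ((mom_diff e _ b _ (hAx t b) (hψx t 1)) x)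
  have hL : (fun s => ((U s)⁻¹).mulVec (ψ s x) k)
      = fun s => (U s)⁻¹ k 0 * ψ s x 0 + (U s)⁻¹ k 1 * ψ s x 1 := funext fun s => hmv s x
  rw [hL, deriv_fun_add (((hVdiff k 0).fun_mul (hψt x 0)).differentiableAt)
      (((hVdiff k 1).fun_mul (hψt x 1)).differentiableAt),
    deriv_fun_mul ((hVdiff k 0).differentiableAt) ((hψt x 0).differentiableAt),
    deriv_fun_mul ((hVdiff k 1).differentiableAt) ((hψt x 1).differentiableAt),
    hD k 0, hD k 1, hmv t x]
  simp only [hmomterm, Finset.sum_add_distrib, ← Finset.mul_sum]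
  simp only [Matrix.smul_apply, Matrix.mul_apply, Fin.sum_univ_two, smul_eq_mul]
  linear_combination ((U t)⁻¹ k 0) * hψeq t x 0 + ((U t)⁻¹ k 1) * hψeq t x 1
    - (e : ℂ) * ((U t)⁻¹ k 0) * hσ 0 - (e : ℂ) * ((U t)⁻¹ k 1) * hσ 1
    - (e : ℂ) * ( ((U t)⁻¹ k 0 * pauliDot (H t) 0 0 + (U t)⁻¹ k 1 * pauliDot (H t) 1 0)
          * ψ t x 0
        + ((U t)⁻¹ k 0 * pauliDot (H t) 0 1 + (U t)⁻¹ k 1 * pauliDot (H t) 1 1)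
          * ψ t x 1 ) * Complex.I_mul_I
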